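/- Let X ∈ F_q^{n×M}, A ∈ F_q^{N×n}, Z ∈ F_q^{ℓ×M}, B ∈ F_q^{N×ℓ}, and Y = AX + BZ. If rank A ≥ n − ρ and Z has at most t nonzero rows, then d_S(⟨X⟩, ⟨Y⟩) ≤ ρ + 2t. -/

import Mathlib

/-- The row space of a matrix: the span of its rows. -/
noncomputable def rowSpace {F : Type*} [Field F] {ι κ : Type*}
    (M : Matrix ι κ F) : Submodule F (κ → F) :=
  Submodule.span F (Set.range fun i => M i)

/-- The subspace distance `d_S(U,V) = dim(U + V) - dim(U ∩ V)`. -/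
noncomputable def sDist {F : Type*} [Field F] {κ : Type*}
    (U V : Submodule F (κ → F)) : ℕ :=
  Module.finrank F ↥(U ⊔ V) - Module.finrank F ↥(U ⊓ V)

lemma rowSpace_eq_span {F : Type*} [Field F] {ι κ : Type*} (M : Matrix ι κ F) :
    rowSpace M = Submodule.span F (Set.range M) := rfl

/-- A row of a matrix lies in its row space. -/
lemma row_mem_rowSpace {F : Type*} [Field F] {ι κ : Type*} (M : Matrix ι κ F) (i : ι) :
    M i ∈ rowSpace M :=
  Submodule.subset_span (Set.mem_range_self i)

/-- The row space of a product is contained in the row space of the right factor. -/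
lemma rowSpace_mul_le {F : Type*} [Field F] {m n k : ℕ}
    (P : Matrix (Fin m) (Fin n) F) (Q : Matrix (Fin n) (Fin k) F) :
    rowSpace (P * Q) ≤ rowSpace Q := by
  rw [rowSpace_eq_span, rowSpace_eq_span]
  refine Submodule.span_le.2 ?_
  rintro _ ⟨i, rfl⟩
  show (P * Q) i ∈ (Submodule.span F (Set.range Q) : Submodule F (Fin k → F))
  have h : (P * Q) i = Q.vecMulLinear (P i) := by
    ext j
    simp [Matrix.mul_apply, Matrix.vecMul, dotProduct]
  rw [h]; change _ ∈ Submodule.span F (Set.range Q.row); rw [← range_vecMulLinear]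
  exact ⟨P i, rfl⟩

open scoped Classical in
/-- The number of rows bound the dimension of the row space, counting only nonzero rows. -/
lemma finrank_rowSpace_le_card_nonzero {F : Type*} [Field F] {ℓ k : ℕ}
    (Z : Matrix (Fin ℓ) (Fin k) F) :
    Module.finrank F (rowSpace Z) ≤ (Finset.univ.filter fun i => Z i ≠ 0).card := by
  classical
  set s : Finset (Fin k → F) :=
    (Finset.univ.filter fun i => Z i ≠ 0).image Z with hs
  have hle : rowSpace Z ≤ Submodule.span F (insert 0 (s : Set (Fin k → F))) := by
    refine Submodule.span_le.2 ?_
    rintro _ ⟨i, rfl⟩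
    show Z i ∈ _
    by_cases h : Z i = 0
    · rw [h]; exact Submodule.subset_span (Set.mem_insert _ _)
    · refine Submodule.subset_span (Set.mem_insert_of_mem _ ?_)
      simp only [hs, Finset.coe_image, Set.mem_image, Finset.mem_coe, Finset.mem_filter]
      exact Finset.mem_image_of_mem Z (by simp [h])
  rw [Submodule.span_insert_zero] at hle
  calc Module.finrank F (rowSpace Z)
      ≤ Module.finrank F (Submodule.span F (s : Set (Fin k → F))) := Submodule.finrank_mono hle
    _ ≤ s.card := finrank_span_finset_le_card s
    _ ≤ (Finset.univ.filter fun i => Z i ≠ 0).card := Finset.card_image_le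

/-- Sylvester-type rank inequality: `rank A + rank X ≤ rank (A * X) + n`. -/
lemma rank_add_rank_le_rank_mul_add {F : Type*} [Field F] {N n k : ℕ}
    (A : Matrix (Fin N) (Fin n) F) (X : Matrix (Fin n) (Fin k) F) :
    A.rank + X.rank ≤ (A * X).rank + n := by
  classical
  set g := X.vecMulLinear with hg
  set p := LinearMap.range A.vecMulLinear with hp
  have hpA : Module.finrank F p = A.rank := by
    rw [hp, range_vecMulLinear, Matrix.rank_eq_finrank_span_row]
  have hcomp : g.comp A.vecMulLinear = (A * X).vecMulLinear :=
    LinearMap.ext fun v => by simp [hg, Matrix.vecMul_vecMul]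
  have hAX : Module.finrank F (Submodule.map g p) = (A * X).rank := by
    rw [hp, ← LinearMap.range_comp, hcomp, range_vecMulLinear,
      Matrix.rank_eq_finrank_span_row]
  have hker : Module.finrank F (LinearMap.ker g) + X.rank = n := by
    have h := LinearMap.finrank_range_add_finrank_ker g
    rw [range_vecMulLinear, ← Matrix.rank_eq_finrank_span_row,
      Module.finrank_fin_fun] at h
    omega
  -- rank-nullity on the restriction of g to p
  have hrn := LinearMap.finrank_range_add_finrank_ker (g.domRestrict p)
  rw [LinearMap.range_domRestrict] at hrn
  have hkd : Module.finrank F (LinearMap.ker (g.domRestrict p))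
      ≤ Module.finrank F (LinearMap.ker g) := by
    rw [LinearMap.ker_domRestrict]
    calc Module.finrank F (Submodule.comap p.subtype (LinearMap.ker g))
        = Module.finrank F (Submodule.map p.subtype
            (Submodule.comap p.subtype (LinearMap.ker g))) :=
          (Submodule.finrank_map_subtype_eq p _).symm
      _ = Module.finrank F (p ⊓ LinearMap.ker g : Submodule F (Fin n → F)) := by
          rw [Submodule.map_comap_subtype]
      _ ≤ Module.finrank F (LinearMap.ker g) := Submodule.finrank_mono inf_le_right
  have hmapAX : Module.finrank F (Submodule.map g p) ≤ (A * X).rank := le_of_eq hAX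
  omega

open scoped Classical in
/-- If `Y = AX + BZ`, `rank A ≥ n − ρ` and `Z` has at most `t`
nonzero rows, then `d_S(⟨X⟩, ⟨Y⟩) ≤ ρ + 2t`. -/
theorem sDist_rowSpace_le_rho_add_two_t
    {F : Type*} [Field F] [Fintype F] {n N ℓ M : ℕ} {ρ t : ℕ}
    (X : Matrix (Fin n) (Fin M) F) (A : Matrix (Fin N) (Fin n) F)
    (Z : Matrix (Fin ℓ) (Fin M) F) (B : Matrix (Fin N) (Fin ℓ) F)
    (Y : Matrix (Fin N) (Fin M) F) (hY : Y = A * X + B * Z)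
    (hA : (n : ℤ) - (ρ : ℤ) ≤ (A.rank : ℤ))
    (hZ : (Finset.univ.filter fun i => Z i ≠ 0).card ≤ t) :
    sDist (rowSpace X) (rowSpace Y) ≤ ρ + 2 * t := by
  classical
  set U := rowSpace X with hU
  set V := rowSpace Y with hV
  set W := rowSpace Z with hW
  set U' := rowSpace (A * X) with hU'
  set W' := rowSpace (B * Z) with hW'
  have hU'U : U' ≤ U := rowSpace_mul_le A X
  have hW'W : W' ≤ W := rowSpace_mul_le B Z
  have hWt : Module.finrank F W ≤ t :=
    le_trans (finrank_rowSpace_le_card_nonzero Z) hZ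
  -- rows of Y lie in U' ⊔ W'
  have hVle : V ≤ U' ⊔ W := by
    rw [hV, rowSpace_eq_span]
    refine Submodule.span_le.2 ?_
    rintro _ ⟨i, rfl⟩
    have : Y i = (A * X) i + (B * Z) i := by rw [hY]; rfl
    rw [this]
    exact Submodule.add_mem_sup (row_mem_rowSpace _ i) (hW'W (row_mem_rowSpace _ i))
  -- rows of A*X lie in V ⊔ W
  have hU'le : U' ≤ V ⊔ W := by
    rw [hU', rowSpace_eq_span]
    refine Submodule.span_le.2 ?_
    rintro _ ⟨i, rfl⟩
    have : (A * X) i = Y i + -((B * Z) i) := by rw [hY]; ext j; simp [Matrix.add_apply]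
    rw [this]
    exact Submodule.add_mem_sup (row_mem_rowSpace _ i)
      (neg_mem (hW'W (row_mem_rowSpace _ i)))
  -- Sylvester consequence
  have hSyl : Module.finrank F U ≤ Module.finrank F U' + ρ := by
    have h1 := rank_add_rank_le_rank_mul_add A X
    have h2 : Module.finrank F U = X.rank := by
      rw [hU, rowSpace_eq_span, Matrix.rank_eq_finrank_span_row]; rfl
    have h3 : Module.finrank F U' = (A * X).rank := by
      rw [hU', rowSpace_eq_span, Matrix.rank_eq_finrank_span_row]; rfl
    omega
  -- dim (U ⊔ V) ≤ dim U + t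
  have hsupUW := Submodule.finrank_sup_add_finrank_inf_eq U W
  have h1 : Module.finrank F ↥(U ⊔ V) ≤ Module.finrank F U + t := by
    have hle : U ⊔ V ≤ U ⊔ W :=
      sup_le le_sup_left (hVle.trans (sup_le (hU'U.trans le_sup_left) le_sup_right))
    have := Submodule.finrank_mono hle
    omega
  -- dim U ≤ dim (U ⊓ V) + ρ + t
  set S := U ⊓ (V ⊔ W) with hS
  have hU'S : U' ≤ S := le_inf hU'U hU'le
  have hSV : S ⊓ V = U ⊓ V := by
    rw [hS, inf_assoc, inf_of_le_right (le_sup_left : V ≤ V ⊔ W)]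
  have hsupSV := Submodule.finrank_sup_add_finrank_inf_eq S V
  rw [hSV] at hsupSV
  have hsupVW := Submodule.finrank_sup_add_finrank_inf_eq V W
  have hSVle : Module.finrank F ↥(S ⊔ V) ≤ Module.finrank F V + t := by
    have hle : S ⊔ V ≤ V ⊔ W := sup_le inf_le_right le_sup_left
    have := Submodule.finrank_mono hle
    omega
  have hU'S' : Module.finrank F U' ≤ Module.finrank F S := Submodule.finrank_mono hU'S
  have h2 : Module.finrank F U ≤ Module.finrank F ↥(U ⊓ V) + ρ + t := by omega
  -- conclude
  have hUV : Module.finrank F ↥(U ⊓ V) ≤ Module.finrank F ↥(U ⊔ V) :=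
    Submodule.finrank_mono (le_trans inf_le_left le_sup_left)
  have hUle : Module.finrank F ↥(U ⊓ V) ≤ Module.finrank F U :=
    Submodule.finrank_mono inf_le_left
  rw [sDist]
  omega
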